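/- Let T be a linear endomorphism of a finite-dimensional complex vector space V and let k be a positive integer. The generalized eigenspace of T^k for the eigenvalue 1 coincides with the generalized eigenspace of T for the eigenvalue 1 if and only if every eigenvalue μ of T with μ^k = 1 satisfies μ = 1. (Equivalently, k is an admissible iteration of T precisely when k is not divisible by the order of any root of unity occurring among the eigenvalues of T.) -/

import Mathlib

open Polynomial Module.End

lemma maxGen_pow_le
    {V : Type*} [AddCommGroup V] [Module ℂ V]
    (T : Module.End ℂ V) (k : ℕ) (μ : ℂ) :
    T.maxGenEigenspace μ ≤ (T ^ k).maxGenEigenspace (μ ^ k) := by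
  intro x hx
  rw [Module.End.mem_maxGenEigenspace] at hx ⊢
  obtain ⟨m, hm⟩ := hx
  obtain ⟨q, hq⟩ : (X - C μ) ^ m ∣ (X ^ k - C (μ ^ k)) ^ m :=
    pow_dvd_pow_of_dvd (dvd_iff_isRoot.mpr (by simp [IsRoot])) m
  rw [mul_comm] at hq
  refine ⟨m, ?_⟩
  have h2 : (T ^ k - μ ^ k • 1) ^ m = aeval T q * (T - μ • 1) ^ m := by
    have := congrArg (aeval T) hq
    simpa [Module.algebraMap_end_eq_smul_id, _root_.smul_pow, ← Module.End.one_eq_id] using this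
  rw [h2, Module.End.mul_apply, hm, map_zero]

theorem admissible_iteration_iff
    {V : Type*} [AddCommGroup V] [Module ℂ V] [FiniteDimensional ℂ V]
    (T : Module.End ℂ V) (k : ℕ) (hk : 0 < k) :
    (T ^ k).maxGenEigenspace 1 = T.maxGenEigenspace 1 ↔
      ∀ μ : ℂ, T.HasEigenvalue μ → μ ^ k = 1 → μ = 1 := by
  constructor
  · intro heq μ hμ hμk
    by_contra hne
    obtain ⟨v, hv⟩ := hμ.exists_hasEigenvector
    have h1 : v ∈ T.maxGenEigenspace μ := by
      rw [Module.End.mem_maxGenEigenspace]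
      exact ⟨1, by simp [Module.End.mem_eigenspace_iff.mp hv.1, sub_smul]⟩
    have h2 : v ∈ T.maxGenEigenspace 1 := by
      rw [← heq, ← hμk]
      exact maxGen_pow_le T k μ h1
    have hd : Disjoint (T.maxGenEigenspace μ) (T.maxGenEigenspace 1) :=
      T.independent_maxGenEigenspace.pairwiseDisjoint hne
    exact hv.2 (Submodule.disjoint_def.mp hd v h1 h2)
  · intro h
    set W := (T ^ k).maxGenEigenspace 1 with hWdef
    have hcomm : Commute (T ^ k) T := ((Commute.refl T).pow_left k)
    have hmap := (T ^ k).mapsTo_maxGenEigenspace_of_comm hcomm 1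
    set T' : Module.End ℂ W := T.restrict hmap with hT'def
    have key : ∀ μ, T'.HasEigenvalue μ → μ = 1 := by
      intro μ hμ
      obtain ⟨v, hv⟩ := hμ.exists_hasEigenvector
      have hvV : T (v : V) = μ • (v : V) := by
        have := Module.End.mem_eigenspace_iff.mp hv.1
        exact congrArg Subtype.val this
      have hv0 : (v : V) ≠ 0 := fun h0 => hv.2 (Subtype.ext h0)
      have hTeig : T.HasEigenvalue μ :=
        Module.End.hasEigenvalue_of_hasEigenvector
          ⟨Module.End.mem_eigenspace_iff.mpr hvV, hv0⟩
      have hTk : ∀ n : ℕ, (T ^ n) (v : V) = μ ^ n • (v : V) := by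
        intro n
        induction n with
        | zero => simp
        | succ n ih =>
          rw [pow_succ', pow_succ', Module.End.mul_apply, ih, map_smul, hvV,
            smul_smul, mul_comm]
      obtain ⟨m, hm⟩ := (Module.End.mem_maxGenEigenspace _ _ _).mp v.2
      have hms : ∀ n : ℕ, ((T ^ k - (1 : ℂ) • 1) ^ n) (v : V)
          = (μ ^ k - 1) ^ n • (v : V) := by
        intro n
        induction n with
        | zero => simp
        | succ n ih =>
          rw [pow_succ', pow_succ', Module.End.mul_apply, ih, map_smul,
            LinearMap.sub_apply, hTk k]
          simp only [LinearMap.smul_apply, Module.End.one_apply, one_smul,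
            smul_sub, smul_smul]
          rw [← sub_smul]
          congr 1
          ring
      rw [hms m] at hm
      rcases smul_eq_zero.mp hm with hz | hz
      · rcases Nat.eq_zero_or_pos m with rfl | hm0
        · simp at hz
        · have := pow_eq_zero_iff hm0.ne' |>.mp hz
          exact h μ hTeig (sub_eq_zero.mp this)
      · exact absurd hz hv0
    have htop : T'.maxGenEigenspace 1 = ⊤ := by
      rw [← Module.End.iSup_maxGenEigenspace_eq_top T']
      refine le_antisymm (le_iSup _ 1) (iSup_le fun μ => ?_)
      rcases eq_or_ne μ 1 with rfl | hμ1
      · exact le_rfl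
      · by_contra hle
        have hbot : T'.maxGenEigenspace μ ≠ ⊥ := by
          intro hb
          exact hle (hb ▸ bot_le)
        exact hμ1 (key μ (Module.End.HasUnifEigenvalue.lt zero_lt_one hbot))
    apply le_antisymm
    · intro x hx
      have hmem : (⟨x, hx⟩ : W) ∈ T'.maxGenEigenspace 1 := htop ▸ Submodule.mem_top
      obtain ⟨m, hm⟩ := (Module.End.mem_maxGenEigenspace _ _ _).mp hmem
      rw [Module.End.mem_maxGenEigenspace]
      refine ⟨m, ?_⟩
      have coe_eq : ∀ (n : ℕ) (y : W),
          ((((T' - (1 : ℂ) • 1)) ^ n) y : V) = ((T - (1 : ℂ) • 1) ^ n) (y : V) := by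
        intro n
        induction n with
        | zero => intro y; simp
        | succ n ih =>
          intro y
          rw [pow_succ', pow_succ', Module.End.mul_apply, Module.End.mul_apply]
          have hco : ∀ z : W, ((((T' - (1:ℂ) • 1)) z : W) : V)
              = (T - (1:ℂ) • 1) (z : V) := by
            intro z
            simp [hT'def, LinearMap.restrict_apply]
            rfl
          rw [hco, ih]
      have := congrArg (Subtype.val) hm
      rw [coe_eq m ⟨x, hx⟩] at this
      simpa using this
    · simpa using maxGen_pow_le T k 1
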